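/- For r = m/(n₁⋯n_j) with m ∈ ℤ, the map χ_r : Σ_N → S¹ given by x ↦ (p_{j+1}(x))^m is a continuous group homomorphism satisfying χ_r(π_N(t)) = exp(2πirt) for all t ∈ ℝ. -/

import Mathlib

open Real

namespace SolenoidPaper

/-- The solenoid over `N`, as the closed subgroup of `∏ S¹` of sequences with
`z j = z (j+1) ^ N j`. -/
noncomputable def solenoid (N : ℕ → ℕ) : Subgroup (∀ _ : ℕ, Circle) where
  carrier := {z | ∀ j, z j = z (j + 1) ^ N j}
  mul_mem' := by
    intro a b ha hb j
    simp only [Pi.mul_apply, mul_pow]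
    rw [← ha j, ← hb j]
  one_mem' := by intro j; simp
  inv_mem' := by
    intro a ha j
    simp only [Pi.inv_apply, inv_pow]
    rw [← ha j]

/-- The one-parameter subgroup `t ↦ ⟨exp(2πit/(n₀⋯n_{j-1}))⟩_j` of the solenoid. -/
noncomputable def piN (N : ℕ → ℕ) (t : ℝ) : ∀ _ : ℕ, Circle :=
  fun j => Circle.exp (2 * π * t / ∏ i ∈ Finset.range j, (N i : ℝ))

lemma circle_exp_nat_mul (n : ℕ) (x : ℝ) : Circle.exp x ^ n = Circle.exp (n * x) := by
  induction n with
  | zero => simp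
  | succ k ih =>
    rw [pow_succ, ih, ← Circle.exp_add]
    congr 1
    push_cast
    ring

lemma piN_mem (N : ℕ → ℕ) (hN : ∀ j, 1 ≤ N j) (t : ℝ) : piN N t ∈ solenoid N := by
  intro j
  have hne : (∏ i ∈ Finset.range j, (N i : ℝ)) ≠ 0 := by
    refine Finset.prod_ne_zero_iff.mpr fun i _ => ?_
    have := hN i; positivity
  have hNj : (N j : ℝ) ≠ 0 := by have := hN j; positivity
  show Circle.exp _ = Circle.exp _ ^ N j
  rw [circle_exp_nat_mul]
  congr 1
  rw [Finset.prod_range_succ]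
  field_simp

lemma circle_exp_zpow (m : ℤ) (x : ℝ) : Circle.exp x ^ m = Circle.exp (m * x) := by
  cases m with
  | ofNat k => rw [Int.ofNat_eq_coe, zpow_natCast, circle_exp_nat_mul]; norm_num
  | negSucc k =>
    rw [zpow_negSucc, circle_exp_nat_mul, ← Circle.exp_neg]
    congr 1
    push_cast
    ring

/-- For `r = m/(n₀⋯n_{j-1})`, the character `χ_r : Σ_N → S¹`, `x ↦ (x j)^m`, is a continuous
group homomorphism with `χ_r (π_N t) = exp (2πirt)`. -/
theorem character_continuous_hom_comp_piN
    (N : ℕ → ℕ) (hN : ∀ j, 2 ≤ N j) (j : ℕ) (m : ℤ) :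
    Continuous (fun x : solenoid N => (x : ∀ _ : ℕ, Circle) j ^ m) ∧
    (∀ x y : solenoid N,
      ((x * y : solenoid N) : ∀ _ : ℕ, Circle) j ^ m =
        (x : ∀ _ : ℕ, Circle) j ^ m * (y : ∀ _ : ℕ, Circle) j ^ m) ∧
    (∀ t : ℝ, piN N t j ^ m =
      Circle.exp (2 * π * ((m : ℝ) / ∏ i ∈ Finset.range j, (N i : ℝ)) * t)) := by
  refine ⟨?_, fun x y => by simp [mul_zpow], fun t => ?_⟩
  · exact ((continuous_apply j).comp continuous_subtype_val).zpow m
  · rw [piN, circle_exp_zpow]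
    congr 1
    ring

end SolenoidPaper
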